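/- Let N ≥ 1 and γ ∈ (1,∞). There exists a constant C = C(N, γ) such that for every f ∈ L^γ(ℝ^N) and every j ∈ ℕ there exists λ ∈ [2^(2^j), 2^(2^(j+1))) with λ^γ · L_N({x ∈ ℝ^N : M(|f|)(x) > 2λ}) ≤ C · 2^{−j} · ∫_{ℝ^N} |f|^γ dx, where L_N denotes N-dimensional Lebesgue measure. -/

import Mathlib

open MeasureTheory Filter
open scoped ENNReal

/-- The centered Hardy–Littlewood maximal function of `|f|` on `ℝ^N`. -/
noncomputable def maxFn {N : ℕ} (f : EuclideanSpace ℝ (Fin N) → ℝ)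
    (x : EuclideanSpace ℝ (Fin N)) : ℝ≥0∞ :=
  ⨆ (R : ℝ) (_ : 0 < R),
    (volume (Metric.ball x R))⁻¹ * ∫⁻ y in Metric.ball x R, ENNReal.ofReal |f y|


open Metric Set MeasureTheory.Measure

lemma aux_geom (γ : ℝ) (hγ : 1 < γ) (a : ℝ) (ha : 0 ≤ a) (j : ℕ) :
    ∑ i ∈ Finset.range (2 ^ j),
      (if (2:ℝ) ^ (2 ^ j + i) < a then ((2:ℝ) ^ (2 ^ j + i)) ^ (γ - 1) * a else 0)
      ≤ (2 ^ (γ-1) / (2 ^ (γ-1) - 1)) * a ^ γ := by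
  set q : ℝ := 2 ^ (γ - 1) with hq_def
  have hq : 1 < q := (Real.one_lt_rpow_iff_of_pos (by norm_num)).mpr (Or.inl ⟨by norm_num, by linarith⟩)
  have hq0 : 0 < q := lt_trans one_pos hq
  have key : ∀ n : ℕ, ((2:ℝ) ^ n) ^ (γ - 1) = q ^ n := by
    intro n
    rw [← Real.rpow_natCast (2:ℝ) n, ← Real.rpow_natCast q n, hq_def,
      ← Real.rpow_mul (by norm_num), ← Real.rpow_mul (by norm_num), mul_comm]
  set S := (Finset.range (2 ^ j)).filter (fun i => (2:ℝ) ^ (2 ^ j + i) < a) with hS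
  have hsum : ∑ i ∈ Finset.range (2 ^ j),
      (if (2:ℝ) ^ (2 ^ j + i) < a then ((2:ℝ) ^ (2 ^ j + i)) ^ (γ - 1) * a else 0)
      = ∑ i ∈ S, ((2:ℝ) ^ (2 ^ j + i)) ^ (γ - 1) * a := by
    rw [Finset.sum_filter]
  rw [hsum]
  rcases S.eq_empty_or_nonempty with h | h
  · rw [h, Finset.sum_empty]
    exact mul_nonneg (div_pos hq0 (by linarith)).le (Real.rpow_nonneg ha γ)
  · set m := S.max' h with hm_def
    have hmS : m ∈ S := S.max'_mem h
    have hma : (2:ℝ) ^ (2 ^ j + m) < a := (Finset.mem_filter.mp hmS).2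
    have ha0 : (0:ℝ) < a := lt_of_le_of_lt (by positivity) hma
    -- bound the sum by a full geometric sum
    have step1 : ∑ i ∈ S, ((2:ℝ) ^ (2 ^ j + i)) ^ (γ - 1) * a
        ≤ (∑ k ∈ Finset.range (2 ^ j + m + 1), q ^ k) * a := by
      rw [Finset.sum_mul]
      have himg : ∑ i ∈ S, ((2:ℝ) ^ (2 ^ j + i)) ^ (γ - 1) * a
          = ∑ i ∈ S, q ^ (2 ^ j + i) * a := by
        refine Finset.sum_congr rfl fun i _ => by rw [key]
      rw [himg]
      have hmap : ∑ i ∈ S, q ^ (2 ^ j + i) * a = ∑ k ∈ S.image (fun i => 2 ^ j + i), q ^ k * a := by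
        rw [Finset.sum_image (by intro x _ y _ h; simp only at h; omega)]
      rw [hmap]
      refine Finset.sum_le_sum_of_subset_of_nonneg ?_ (fun k _ _ => by positivity)
      intro k hk
      simp only [Finset.mem_image] at hk
      obtain ⟨i, hi, rfl⟩ := hk
      have : i ≤ m := S.le_max' i hi
      exact Finset.mem_range.mpr (by omega)
    refine step1.trans ?_
    have hgeom : ∑ k ∈ Finset.range (2 ^ j + m + 1), q ^ k = (q ^ (2 ^ j + m + 1) - 1) / (q - 1) :=
      geom_sum_eq (ne_of_gt hq) _
    have hle : (∑ k ∈ Finset.range (2 ^ j + m + 1), q ^ k) * a ≤ q / (q - 1) * (q ^ (2 ^ j + m)) * a := by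
      rw [hgeom]
      have : (q ^ (2 ^ j + m + 1) - 1) / (q - 1) ≤ q / (q - 1) * q ^ (2 ^ j + m) := by
        rw [div_mul_eq_mul_div, div_le_div_iff_of_pos_right (by linarith)]
        rw [pow_succ]
        nlinarith [pow_pos hq0 (2 ^ j + m)]
      exact mul_le_mul_of_nonneg_right this ha0.le
    refine hle.trans ?_
    have hqm : q ^ (2 ^ j + m) ≤ a ^ (γ - 1) := by
      rw [← key]
      exact Real.rpow_le_rpow (by positivity) hma.le (by linarith)
    have hfin : q / (q - 1) * a ^ (γ - 1) * a = q / (q - 1) * a ^ γ := by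
      rw [mul_assoc, ← Real.rpow_add_one (ne_of_gt ha0)]
      ring_nf
    calc q / (q - 1) * q ^ (2 ^ j + m) * a ≤ q / (q - 1) * a ^ (γ - 1) * a := by
          have hq1 : 0 ≤ q / (q - 1) := (div_pos hq0 (by linarith)).le
          exact mul_le_mul_of_nonneg_right (mul_le_mul_of_nonneg_left hqm hq1) ha0.le
      _ = q / (q - 1) * a ^ γ := hfin

lemma maxFn_congr {N : ℕ} {f g : EuclideanSpace ℝ (Fin N) → ℝ} (h : f =ᵐ[volume] g) :
    maxFn f = maxFn g := by
  funext x
  unfold maxFn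
  congr 1; funext R; congr 1; funext hR; congr 1
  refine lintegral_congr_ae ?_
  have h2 : (fun y => ENNReal.ofReal |f y|) =ᵐ[volume] (fun y => ENNReal.ofReal |g y|) :=
    h.mono fun y hy => by simp [hy]
  exact h2.restrict

lemma maxFn_le_bound {N : ℕ} (g : EuclideanSpace ℝ (Fin N) → ℝ) (lam : ℝ)
    (hg : ∀ y, |g y| ≤ lam) (x : EuclideanSpace ℝ (Fin N)) :
    maxFn g x ≤ ENNReal.ofReal lam := by
  refine iSup₂_le fun R hR => ?_
  have h1 : ∫⁻ y in Metric.ball x R, ENNReal.ofReal |g y|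
      ≤ ENNReal.ofReal lam * volume (Metric.ball x R) := by
    calc ∫⁻ y in Metric.ball x R, ENNReal.ofReal |g y|
        ≤ ∫⁻ _y in Metric.ball x R, ENNReal.ofReal lam :=
          lintegral_mono fun y => ENNReal.ofReal_le_ofReal (hg y)
      _ = ENNReal.ofReal lam * volume (Metric.ball x R) := by
          rw [setLIntegral_const]
  calc (volume (Metric.ball x R))⁻¹ * ∫⁻ y in Metric.ball x R, ENNReal.ofReal |g y|
      ≤ (volume (Metric.ball x R))⁻¹ * (ENNReal.ofReal lam * volume (Metric.ball x R)) := by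
        gcongr
    _ = ENNReal.ofReal lam * ((volume (Metric.ball x R))⁻¹ * volume (Metric.ball x R)) := by
        ring
    _ ≤ ENNReal.ofReal lam * 1 := by
        gcongr
        exact ENNReal.inv_mul_le_one _
    _ = ENNReal.ofReal lam := mul_one _

lemma maxFn_le_add {N : ℕ} (f g h : EuclideanSpace ℝ (Fin N) → ℝ)
    (hg : Measurable g)
    (hfg : ∀ y, |f y| ≤ |g y| + |h y|) (x : EuclideanSpace ℝ (Fin N)) :
    maxFn f x ≤ maxFn g x + maxFn h x := by
  refine iSup₂_le fun R hR => ?_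
  have hint : ∫⁻ y in Metric.ball x R, ENNReal.ofReal |f y|
      ≤ (∫⁻ y in Metric.ball x R, ENNReal.ofReal |g y|)
        + ∫⁻ y in Metric.ball x R, ENNReal.ofReal |h y| := by
    rw [← lintegral_add_left (hg.abs.ennreal_ofReal)]
    refine lintegral_mono fun y => ?_
    rw [← ENNReal.ofReal_add (abs_nonneg _) (abs_nonneg _)]
    exact ENNReal.ofReal_le_ofReal (hfg y)
  calc (volume (Metric.ball x R))⁻¹ * ∫⁻ y in Metric.ball x R, ENNReal.ofReal |f y|
      ≤ (volume (Metric.ball x R))⁻¹ * ((∫⁻ y in Metric.ball x R, ENNReal.ofReal |g y|)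
          + ∫⁻ y in Metric.ball x R, ENNReal.ofReal |h y|) := by gcongr
    _ = (volume (Metric.ball x R))⁻¹ * (∫⁻ y in Metric.ball x R, ENNReal.ofReal |g y|)
          + (volume (Metric.ball x R))⁻¹ * ∫⁻ y in Metric.ball x R, ENNReal.ofReal |h y| := by
        rw [mul_add]
    _ ≤ maxFn g x + maxFn h x := by
        gcongr
        · exact le_iSup₂_of_le R hR le_rfl
        · exact le_iSup₂_of_le R hR le_rfl

lemma maxFn_weak {N : ℕ} (hN : 1 ≤ N) (g : EuclideanSpace ℝ (Fin N) → ℝ) (t : ℝ≥0∞)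
    (ht0 : t ≠ 0) (htop : t ≠ ∞) :
    t * volume {x | t < maxFn g x} ≤ (4 : ℝ≥0∞) ^ N * ∫⁻ y, ENNReal.ofReal |g y| := by
  classical
  haveI : Nonempty (Fin N) := ⟨⟨0, hN⟩⟩
  set A := ∫⁻ y, ENNReal.ofReal |g y| with hA
  by_cases hAtop : A = ∞
  · rw [hAtop, ENNReal.mul_top (by simp)]; exact le_top
  set E := {x | t < maxFn g x} with hE
  have key : ∀ x ∈ E, ∃ R, 0 < R ∧
      t * volume (Metric.ball x R) ≤ ∫⁻ y in Metric.ball x R, ENNReal.ofReal |g y| := by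
    intro x hx
    have hx' : t < ⨆ (R : ℝ) (_ : 0 < R),
        (volume (Metric.ball x R))⁻¹ * ∫⁻ y in Metric.ball x R, ENNReal.ofReal |g y| := hx
    rw [lt_iSup_iff] at hx'
    obtain ⟨R, hR⟩ := hx'
    rw [lt_iSup_iff] at hR
    obtain ⟨hRpos, hR⟩ := hR
    refine ⟨R, hRpos, ?_⟩
    have hv0 : volume (Metric.ball x R) ≠ 0 := (measure_ball_pos volume x hRpos).ne'
    have hvtop : volume (Metric.ball x R) ≠ ∞ := measure_ball_lt_top.ne
    calc t * volume (Metric.ball x R)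
        ≤ ((volume (Metric.ball x R))⁻¹ * ∫⁻ y in Metric.ball x R, ENNReal.ofReal |g y|)
            * volume (Metric.ball x R) := mul_le_mul_left hR.le _
      _ = (∫⁻ y in Metric.ball x R, ENNReal.ofReal |g y|)
            * ((volume (Metric.ball x R))⁻¹ * volume (Metric.ball x R)) := by ring
      _ = ∫⁻ y in Metric.ball x R, ENNReal.ofReal |g y| := by
          rw [ENNReal.inv_mul_cancel hv0 hvtop, mul_one]
  choose! r hr0 hrle using key
  -- uniform radius bound
  have c0 : volume (Metric.ball (0 : EuclideanSpace ℝ (Fin N)) 1) ≠ 0 :=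
    (measure_ball_pos volume _ one_pos).ne'
  have ctop : volume (Metric.ball (0 : EuclideanSpace ℝ (Fin N)) 1) ≠ ∞ :=
    measure_ball_lt_top.ne
  set c := volume (Metric.ball (0 : EuclideanSpace ℝ (Fin N)) 1) with hc
  set M := (t⁻¹ * A * c⁻¹).toReal with hM
  have hMtop : t⁻¹ * A * c⁻¹ ≠ ∞ :=
    ENNReal.mul_ne_top (ENNReal.mul_ne_top (ENNReal.inv_ne_top.mpr ht0) hAtop)
      (ENNReal.inv_ne_top.mpr c0)
  have hrR : ∀ x ∈ E, r x ≤ max 1 M := by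
    intro x hx
    have h1 : t * volume (Metric.ball x (r x)) ≤ A :=
      (hrle x hx).trans (setLIntegral_le_lintegral _ _)
    have h2 : volume (Metric.ball x (r x)) = ENNReal.ofReal ((r x) ^ N) * c := by
      rw [Measure.addHaar_ball volume x (hr0 x hx).le, finrank_euclideanSpace_fin]
    have hv : ENNReal.ofReal ((r x) ^ N) * c ≤ t⁻¹ * A := by
      calc ENNReal.ofReal ((r x) ^ N) * c
          = t⁻¹ * (t * (ENNReal.ofReal ((r x) ^ N) * c)) := by
            rw [← mul_assoc, ENNReal.inv_mul_cancel ht0 htop, one_mul]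
        _ ≤ t⁻¹ * A := by rw [← h2]; gcongr
    have h3 : ENNReal.ofReal ((r x) ^ N) ≤ t⁻¹ * A * c⁻¹ := by
      calc ENNReal.ofReal ((r x) ^ N)
          = ENNReal.ofReal ((r x) ^ N) * c * c⁻¹ := by
            rw [mul_assoc, ENNReal.mul_inv_cancel c0 ctop, mul_one]
        _ ≤ t⁻¹ * A * c⁻¹ := by gcongr
    have h4 : (r x) ^ N ≤ M := (ENNReal.ofReal_le_iff_le_toReal hMtop).mp h3
    rcases le_or_gt (r x) 1 with h | h
    · exact le_max_of_le_left h
    · refine le_max_of_le_right ?_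
      calc r x = r x ^ 1 := (pow_one _).symm
        _ ≤ r x ^ N := pow_le_pow_right₀ h.le hN
        _ ≤ M := h4
  -- Vitali
  obtain ⟨u, uE, u_disj, hcov⟩ :=
    Vitali.exists_disjoint_subfamily_covering_enlargement_closedBall E (fun z => z) r
      (max 1 M) hrR 4 (by norm_num)
  -- countability of u
  have hu_count : u.Countable := by
    have hcnt := Measure.countable_meas_pos_of_disjoint_iUnion (μ := volume)
      (As := fun b : EuclideanSpace ℝ (Fin N) =>
        if b ∈ u then Metric.closedBall b (r b) else ∅) ?_ ?_
    · refine hcnt.mono ?_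
      intro b hb
      simp only [mem_setOf_eq, if_pos hb]
      have : 0 < volume (Metric.ball b (r b)) := measure_ball_pos volume b (hr0 b (uE hb))
      exact this.trans_le (measure_mono ball_subset_closedBall)
    · intro b
      by_cases hb : b ∈ u
      · simpa [hb] using (measurableSet_closedBall :
          MeasurableSet (Metric.closedBall b (r b)))
      · simp [hb]
    · intro b c hbc
      by_cases hb : b ∈ u
      · by_cases hc : c ∈ u
        · simp only [Function.onFun, if_pos hb, if_pos hc]
          exact u_disj hb hc hbc
        · simp only [Function.onFun, if_pos hb, if_neg hc]
          exact disjoint_empty _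
      · simp only [Function.onFun, if_neg hb]
        exact empty_disjoint _
  haveI := hu_count.to_subtype
  have hEcov : E ⊆ ⋃ b ∈ u, Metric.closedBall b (4 * r b) := by
    intro x hx
    obtain ⟨b, hb, hsub⟩ := hcov x hx
    exact mem_iUnion₂.mpr ⟨b, hb, hsub (mem_closedBall_self (hr0 x hx).le)⟩
  have hdil : ∀ b ∈ u, volume (Metric.closedBall b (4 * r b))
      = (4 : ℝ≥0∞) ^ N * volume (Metric.ball b (r b)) := by
    intro b hb
    have h0 : (0:ℝ) ≤ r b := (hr0 b (uE hb)).le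
    rw [Measure.addHaar_closedBall_eq_addHaar_ball,
      Measure.addHaar_ball volume _ (by positivity : (0:ℝ) ≤ 4 * r b),
      Measure.addHaar_ball volume _ h0, finrank_euclideanSpace_fin, mul_pow, ← mul_assoc,
      ENNReal.ofReal_mul (by positivity)]
    congr 1
    rw [ENNReal.ofReal_pow (by norm_num)]
    norm_num
  calc t * volume E
      ≤ t * ∑' b : u, volume (Metric.closedBall (b : EuclideanSpace ℝ (Fin N)) (4 * r b)) := by
        gcongr
        exact (measure_mono hEcov).trans (measure_biUnion_le volume hu_count _)
    _ = ∑' b : u, t * volume (Metric.closedBall (b : EuclideanSpace ℝ (Fin N)) (4 * r b)) :=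
        ENNReal.tsum_mul_left.symm
    _ ≤ ∑' b : u, (4 : ℝ≥0∞) ^ N *
          ∫⁻ y in Metric.ball (b : EuclideanSpace ℝ (Fin N)) (r b), ENNReal.ofReal |g y| := by
        refine ENNReal.tsum_le_tsum fun b => ?_
        rw [hdil b b.2]
        calc t * ((4:ℝ≥0∞)^N * volume (Metric.ball (b : EuclideanSpace ℝ (Fin N)) (r b)))
            = (4:ℝ≥0∞)^N * (t * volume (Metric.ball (b : EuclideanSpace ℝ (Fin N)) (r b))) := by
              ring
          _ ≤ _ := by gcongr; exact hrle b (uE b.2)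
    _ = (4 : ℝ≥0∞) ^ N * ∑' b : u,
          ∫⁻ y in Metric.ball (b : EuclideanSpace ℝ (Fin N)) (r b), ENNReal.ofReal |g y| :=
        ENNReal.tsum_mul_left
    _ ≤ (4 : ℝ≥0∞) ^ N * A := by
        gcongr
        have hdisj : Pairwise (Function.onFun Disjoint
            fun b : u => Metric.ball (b : EuclideanSpace ℝ (Fin N)) (r b)) := by
          intro b c hbc
          exact (u_disj b.2 c.2 (Subtype.val_injective.ne hbc)).mono
            ball_subset_closedBall ball_subset_closedBall
        rw [← lintegral_iUnion (fun b => measurableSet_ball) hdisj]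
        exact setLIntegral_le_lintegral _ _

/-- There is a constant `C = C(N, γ)` such that for every `f ∈ L^γ(ℝ^N)` and every `j`
there is `λ ∈ [2^(2^j), 2^(2^(j+1)))` with
`λ^γ L_N({M(|f|) > 2λ}) ≤ C 2^{-j} ∫ |f|^γ`. -/
theorem maximal_function_dyadic_level_selection
    (N : ℕ) (hN : 1 ≤ N) (γ : ℝ) (hγ : 1 < γ) :
    ∃ C : ℝ, 0 < C ∧
      ∀ f : EuclideanSpace ℝ (Fin N) → ℝ,
        MemLp f (ENNReal.ofReal γ) volume →
        ∀ j : ℕ, ∃ lam : ℝ,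
          (2 : ℝ) ^ (2 ^ j) ≤ lam ∧ lam < (2 : ℝ) ^ (2 ^ (j + 1)) ∧
          ENNReal.ofReal (lam ^ γ) *
              volume {x | ENNReal.ofReal (2 * lam) < maxFn f x} ≤
            ENNReal.ofReal (C * (2 : ℝ) ^ (-(j : ℝ))) *
              ∫⁻ x, ENNReal.ofReal |f x| ^ γ := by
  classical
  have hq : (1:ℝ) < 2 ^ (γ - 1) :=
    (Real.one_lt_rpow_iff_of_pos (by norm_num)).mpr (Or.inl ⟨by norm_num, by linarith⟩)
  set Cγ : ℝ := 2 ^ (γ-1) / (2 ^ (γ-1) - 1) with hCγ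
  have hCγpos : 0 < Cγ := div_pos (by linarith) (by linarith)
  set K : ℝ := 4 ^ N * Cγ with hK
  have hKpos : 0 < K := by positivity
  refine ⟨2 * K + 1, by positivity, ?_⟩
  intro f hf j
  -- measurable representative
  have hmf := hf.aestronglyMeasurable
  set g : EuclideanSpace ℝ (Fin N) → ℝ := hmf.mk f with hg_def
  have hgm : Measurable g := hmf.stronglyMeasurable_mk.measurable
  have hfg : f =ᵐ[volume] g := hmf.ae_eq_mk
  have hmax : maxFn f = maxFn g := maxFn_congr hfg
  set Iγ := ∫⁻ x, ENNReal.ofReal |f x| ^ γ with hIγ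
  have hIeq : (∫⁻ x, ENNReal.ofReal |g x| ^ γ) = Iγ := by
    refine lintegral_congr_ae ?_
    filter_upwards [hfg] with x hx
    rw [hx]
  -- finiteness of Iγ
  have hγ0 : (0:ℝ) < γ := by linarith
  have hIγ_top : Iγ ≠ ∞ := by
    have hp0 : ENNReal.ofReal γ ≠ 0 := by
      simp [ENNReal.ofReal_eq_zero, not_le, hγ0]
    have hptop : ENNReal.ofReal γ ≠ ∞ := ENNReal.ofReal_ne_top
    have h1 := hf.eLpNorm_lt_top
    rw [eLpNorm_eq_lintegral_rpow_enorm_toReal hp0 hptop] at h1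
    rw [ENNReal.toReal_ofReal hγ0.le] at h1
    have h2 : (∫⁻ x, ‖f x‖ₑ ^ γ) < ∞ := by
      have := (ENNReal.rpow_lt_top_iff_of_pos (by positivity : (0:ℝ) < 1/γ)).mp h1
      exact this
    have h3 : (∫⁻ x, ‖f x‖ₑ ^ γ) = Iγ := by
      refine lintegral_congr fun x => ?_
      rw [Real.enorm_eq_ofReal_abs]
    rw [h3] at h2
    exact h2.ne
  -- the dyadic levels
  set lam : ℕ → ℝ := fun i => (2:ℝ) ^ (2 ^ j + i) with hlam
  have hlam_pos : ∀ i, (0:ℝ) < lam i := fun i => by positivity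
  have hlam_one : ∀ i, (1:ℝ) ≤ lam i := fun i => one_le_pow₀ (by norm_num)
  set a : ℕ → ℝ≥0∞ := fun i =>
    ENNReal.ofReal (lam i ^ γ) * volume {x | ENNReal.ofReal (2 * lam i) < maxFn f x} with ha
  set h : ℕ → EuclideanSpace ℝ (Fin N) → ℝ≥0∞ := fun i y =>
    if lam i < |g y| then ENNReal.ofReal |g y| else 0 with hh
  have hhm : ∀ i, Measurable (h i) := by
    intro i
    exact Measurable.ite (measurableSet_lt measurable_const hgm.abs)
      hgm.abs.ennreal_ofReal measurable_const
  -- step 1 : individual level estimate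
  have key1 : ∀ i, a i ≤ (4:ℝ≥0∞)^N * (ENNReal.ofReal (lam i ^ (γ-1)) * ∫⁻ y, h i y) := by
    intro i
    set l := lam i with hl
    have hl0 : (0:ℝ) < l := hlam_pos i
    set gB : EuclideanSpace ℝ (Fin N) → ℝ := fun y => if l < |g y| then g y else 0 with hgB
    set gS : EuclideanSpace ℝ (Fin N) → ℝ := fun y => if l < |g y| then 0 else g y with hgS
    have hgBm : Measurable gB :=
      Measurable.ite (measurableSet_lt measurable_const hgm.abs) hgm measurable_const
    have hsplit : ∀ y, |g y| ≤ |gB y| + |gS y| := by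
      intro y
      by_cases hy : l < |g y| <;> simp [hgB, hgS, hy]
    have hSbdd : ∀ y, |gS y| ≤ l := by
      intro y
      by_cases hy : l < |g y| <;> simp [hgS, hy]
      · exact hl0.le
      · exact not_lt.mp hy
    -- set inclusion
    have hincl : {x | ENNReal.ofReal (2 * l) < maxFn f x}
        ⊆ {x | ENNReal.ofReal l < maxFn gB x} := by
      intro x hx
      simp only [mem_setOf_eq] at hx ⊢
      by_contra hcon
      push_neg at hcon
      have h1 : maxFn f x ≤ maxFn gB x + maxFn gS x := by
        rw [hmax]; exact maxFn_le_add g gB gS hgBm hsplit x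
      have h2 : maxFn gS x ≤ ENNReal.ofReal l := maxFn_le_bound gS l hSbdd x
      have h3 : maxFn f x ≤ ENNReal.ofReal l + ENNReal.ofReal l :=
        h1.trans (add_le_add hcon h2)
      rw [← ENNReal.ofReal_add hl0.le hl0.le] at h3
      have : (2:ℝ) * l = l + l := by ring
      rw [this] at hx
      exact absurd (hx.trans_le h3) (lt_irrefl _)
    -- weak 1-1
    have hweak := maxFn_weak hN gB (ENNReal.ofReal l)
      (by simp [ENNReal.ofReal_eq_zero, not_le, hl0]) ENNReal.ofReal_ne_top
    have hBint : (∫⁻ y, ENNReal.ofReal |gB y|) = ∫⁻ y, h i y := by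
      refine lintegral_congr fun y => ?_
      by_cases hy : l < |g y| <;> simp [hgB, hh, ← hl, hy]
    rw [hBint] at hweak
    -- combine
    have hsplit_pow : ENNReal.ofReal (l ^ γ)
        = ENNReal.ofReal (l ^ (γ-1)) * ENNReal.ofReal l := by
      rw [← ENNReal.ofReal_mul (by positivity)]
      congr 1
      rw [← Real.rpow_add_one hl0.ne' (γ-1)]
      ring_nf
    calc a i = ENNReal.ofReal (l ^ γ) * volume {x | ENNReal.ofReal (2 * l) < maxFn f x} := rfl
      _ ≤ ENNReal.ofReal (l ^ γ) * volume {x | ENNReal.ofReal l < maxFn gB x} :=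
          mul_le_mul_right (measure_mono hincl) _
      _ = ENNReal.ofReal (l ^ (γ-1)) *
            (ENNReal.ofReal l * volume {x | ENNReal.ofReal l < maxFn gB x}) := by
          rw [hsplit_pow]; ring
      _ ≤ ENNReal.ofReal (l ^ (γ-1)) * ((4:ℝ≥0∞)^N * ∫⁻ y, h i y) := by gcongr
      _ = (4:ℝ≥0∞)^N * (ENNReal.ofReal (l ^ (γ-1)) * ∫⁻ y, h i y) := by ring
  -- step 2 : sum bound
  have key2 : ∑ i ∈ Finset.range (2^j), a i ≤ ENNReal.ofReal K * Iγ := by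
    calc ∑ i ∈ Finset.range (2^j), a i
        ≤ ∑ i ∈ Finset.range (2^j),
            (4:ℝ≥0∞)^N * (ENNReal.ofReal (lam i ^ (γ-1)) * ∫⁻ y, h i y) :=
          Finset.sum_le_sum fun i _ => key1 i
      _ = (4:ℝ≥0∞)^N * ∑ i ∈ Finset.range (2^j),
            (ENNReal.ofReal (lam i ^ (γ-1)) * ∫⁻ y, h i y) := by
          rw [Finset.mul_sum]
      _ = (4:ℝ≥0∞)^N * ∑ i ∈ Finset.range (2^j),
            ∫⁻ y, ENNReal.ofReal (lam i ^ (γ-1)) * h i y := by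
          congr 1
          refine Finset.sum_congr rfl fun i _ => ?_
          rw [lintegral_const_mul _ (hhm i)]
      _ = (4:ℝ≥0∞)^N * ∫⁻ y, ∑ i ∈ Finset.range (2^j),
            ENNReal.ofReal (lam i ^ (γ-1)) * h i y := by
          congr 1
          rw [lintegral_finset_sum]
          intro i _
          exact (hhm i).const_mul _
      _ ≤ (4:ℝ≥0∞)^N * ∫⁻ y, ENNReal.ofReal Cγ * (ENNReal.ofReal |g y| ^ γ) := by
          gcongr with y
          -- pointwise bound
          have hptw : ∑ i ∈ Finset.range (2^j), ENNReal.ofReal (lam i ^ (γ-1)) * h i y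
              = ENNReal.ofReal (∑ i ∈ Finset.range (2^j),
                  if (2:ℝ) ^ (2 ^ j + i) < |g y| then ((2:ℝ) ^ (2 ^ j + i)) ^ (γ-1) * |g y| else 0) := by
            rw [ENNReal.ofReal_sum_of_nonneg]
            · refine Finset.sum_congr rfl fun i _ => ?_
              simp only [hh, hlam]
              by_cases hy : (2:ℝ) ^ (2 ^ j + i) < |g y|
              · rw [if_pos hy, if_pos hy, ← ENNReal.ofReal_mul (by positivity)]
              · rw [if_neg hy, if_neg hy, mul_zero, ENNReal.ofReal_zero]
            · intro i _
              by_cases hy : (2:ℝ) ^ (2 ^ j + i) < |g y|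
              · rw [if_pos hy]; positivity
              · rw [if_neg hy]
          rw [hptw]
          have := aux_geom γ hγ |g y| (abs_nonneg _) j
          calc ENNReal.ofReal (∑ i ∈ Finset.range (2^j),
                  if (2:ℝ) ^ (2 ^ j + i) < |g y| then ((2:ℝ) ^ (2 ^ j + i)) ^ (γ-1) * |g y| else 0)
              ≤ ENNReal.ofReal (Cγ * |g y| ^ γ) := ENNReal.ofReal_le_ofReal this
            _ = ENNReal.ofReal Cγ * ENNReal.ofReal (|g y| ^ γ) :=
                ENNReal.ofReal_mul hCγpos.le
            _ = ENNReal.ofReal Cγ * (ENNReal.ofReal |g y| ^ γ) := by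
                rw [← ENNReal.ofReal_rpow_of_nonneg (abs_nonneg _) hγ0.le]
      _ = (4:ℝ≥0∞)^N * (ENNReal.ofReal Cγ * ∫⁻ y, ENNReal.ofReal |g y| ^ γ) := by
          rw [lintegral_const_mul _ ((hgm.abs.ennreal_ofReal).pow_const γ)]
      _ = ENNReal.ofReal K * Iγ := by
          rw [hIeq, hK, ENNReal.ofReal_mul (by positivity), ← mul_assoc]
          congr 2
          rw [ENNReal.ofReal_pow (by norm_num)]
          norm_num
  -- bounds on the dyadic levels
  have hlam_lb : ∀ i, (2:ℝ) ^ (2 ^ j) ≤ lam i := fun i =>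
    pow_le_pow_right₀ one_le_two (Nat.le_add_right _ _)
  have hlam_ub : ∀ i, i < 2^j → lam i < (2:ℝ) ^ (2 ^ (j+1)) := by
    intro i hi
    refine pow_lt_pow_right₀ one_lt_two ?_
    have h2j : 2 ^ (j+1) = 2 ^ j + 2 ^ j := by ring
    omega
  by_cases hI0 : Iγ = 0
  · refine ⟨lam 0, hlam_lb 0, hlam_ub 0 (Nat.two_pow_pos j), ?_⟩
    have hg0 : (fun y => ENNReal.ofReal |g y|) =ᵐ[volume] 0 := by
      have h0 : (fun x => ENNReal.ofReal |g x| ^ γ) =ᵐ[volume] 0 := by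
        rw [← lintegral_eq_zero_iff ((hgm.abs.ennreal_ofReal).pow_const γ)]
        rw [hIeq]; exact hI0
      filter_upwards [h0] with y hy
      simp only [Pi.zero_apply] at hy ⊢
      rcases ENNReal.rpow_eq_zero_iff.mp hy with ⟨h', _⟩ | ⟨_, h'⟩
      · exact h'
      · linarith
    have hmax0 : ∀ x, maxFn f x = 0 := by
      intro x
      rw [hmax]
      refine le_antisymm ?_ zero_le
      refine iSup₂_le fun R hR => ?_
      have hz : ∫⁻ y in Metric.ball x R, ENNReal.ofReal |g y| = 0 := by
        rw [lintegral_congr_ae hg0.restrict]; simp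
      rw [hz, mul_zero]
    have hempty : {x | ENNReal.ofReal (2 * lam 0) < maxFn f x} = ∅ := by
      ext x
      simp [hmax0 x]
    rw [hempty]
    simp
  · -- pigeonhole among the 2^j levels
    set B := ENNReal.ofReal ((2*K+1) * (2:ℝ) ^ (-(j:ℝ))) * Iγ with hB
    have hex : ∃ i ∈ Finset.range (2^j), a i ≤ B := by
      by_contra hcon
      push_neg at hcon
      have hsum_lb : (Finset.range (2^j)).card • B ≤ ∑ i ∈ Finset.range (2^j), a i :=
        Finset.card_nsmul_le_sum (Finset.range (2^j)) a B (fun i hi => (hcon i hi).le)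
      rw [Finset.card_range, nsmul_eq_mul] at hsum_lb
      have hone : (2:ℝ) ^ (j:ℝ) * (2:ℝ) ^ (-(j:ℝ)) = 1 := by
        rw [← Real.rpow_add two_pos]
        simp
      have hreal : ((2^j : ℕ) : ℝ) * ((2*K+1) * (2:ℝ) ^ (-(j:ℝ))) = 2*K+1 := by
        push_cast
        rw [← Real.rpow_natCast 2 j]
        nlinarith [hone]
      have hcast : ((2^j : ℕ) : ℝ≥0∞) * B = ENNReal.ofReal (2*K+1) * Iγ := by
        rw [hB, ← mul_assoc]
        congr 1
        rw [← ENNReal.ofReal_natCast (2^j), ← ENNReal.ofReal_mul (by positivity), hreal]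
      rw [hcast] at hsum_lb
      have hlt : ENNReal.ofReal K * Iγ < ENNReal.ofReal (2*K+1) * Iγ := by
        refine ENNReal.mul_lt_mul_left hI0 hIγ_top ?_
        exact (ENNReal.ofReal_lt_ofReal_iff (by positivity)).mpr (by linarith)
      exact absurd (hsum_lb.trans key2) (not_le.mpr hlt)
    obtain ⟨i, hi, hai⟩ := hex
    exact ⟨lam i, hlam_lb i, hlam_ub i (Finset.mem_range.mp hi), hai⟩
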